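/- Let A be a nonempty finite alphabet and S a substitution on A, and suppose Ĉ > 0 and θ ≥ 1 satisfy |Sⁿ(a)| ≤ Ĉ·θⁿ for all a ∈ A and n ∈ ℕ. Let u be a nonempty word over A and ω₀ = u^∞ the associated periodic configuration. Then for every n ∈ ℕ and every r ≥ 1, the number of distinct length-r words occurring in Sⁿ(ω₀) satisfies |W(Sⁿ(ω₀))_r| ≤ Ĉ·θⁿ·|u|. -/

import Mathlib

namespace QC

variable {A : Type*}

/-- The shift action of `ℤ` on configurations: `(m · ω)(n) = ω (n - m)`. -/
def shift (m : ℤ) (ω : ℤ → A) : ℤ → A := fun n => ω (n - m)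

/-- The word `u` occurs in the configuration `ω` (at some position `k`). -/
def Occurs (u : List A) (ω : ℤ → A) : Prop :=
  ∃ k : ℤ, u = (List.range u.length).map fun i => ω (k + i)

/-- The dictionary of a configuration: all (nonempty) words occurring in it. -/
def Dict (ω : ℤ → A) : Set (List A) := {u | u ≠ [] ∧ Occurs u ω}

/-- The set of length-`ℓ` words occurring in a configuration. -/
def DictLen (ω : ℤ → A) (ℓ : ℕ) : Set (List A) := {u | u.length = ℓ ∧ Occurs u ω}

/-- The extension of a substitution rule `S : A → List A` to words, by concatenation. -/
def wordSub (S : A → List A) (u : List A) : List A := (u.map S).flatten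

/-- A word is legal for `S` if it is an infix of `Sⁿ(a)` for some letter `a` and `n : ℕ`. -/
def Legal (S : A → List A) (u : List A) : Prop :=
  ∃ (a : A) (n : ℕ), u <:+: (wordSub S)^[n] [a]

/-- `S` is primitive: some power `p ≥ 1` of `S` maps every letter to a word containing
all letters. -/
def Primitive (S : A → List A) : Prop :=
  ∃ p : ℕ, 1 ≤ p ∧ ∀ a b : A, b ∈ (wordSub S)^[p] [a]

/-- The starting position (in `S ω`) of the block coming from the letter `ω k`. -/
def blockStart (S : A → List A) (ω : ℤ → A) (k : ℤ) : ℤ :=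
  if 0 ≤ k then ((List.range k.toNat).map fun i => ((S (ω i)).length : ℤ)).sum
  else -((List.range (-k).toNat).map fun i => ((S (ω (-(i : ℤ) - 1))).length : ℤ)).sum

open Classical in
/-- The extension of a substitution to two-sided configurations: the block structure of
`S ω` is `⋯ S(ω(-1)) . S(ω 0) S(ω 1) ⋯`, with the block of `ω 0` starting at position `0`. -/
noncomputable def confSub [Nonempty A] (S : A → List A) (ω : ℤ → A) : ℤ → A := fun n =>
  if h : ∃ k : ℤ, blockStart S ω k ≤ n ∧ n < blockStart S ω (k + 1) then
    (S (ω (Classical.choose h))).getD (n - blockStart S ω (Classical.choose h)).toNat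
      (Classical.arbitrary A)
  else Classical.arbitrary A

/-- The metric on configurations:
`d(ω₁, ω₂) = inf { 1/(r+1) : ω₁ and ω₂ agree on all |k| < r }`. -/
noncomputable def confDist (ω₁ ω₂ : ℤ → A) : ℝ :=
  sInf {x : ℝ | ∃ r : ℕ, x = 1 / (r + 1) ∧ ∀ k : ℤ, |k| < (r : ℤ) → ω₁ k = ω₂ k}

/-- Distance from a configuration to a set of configurations. -/
noncomputable def distToSet (ω : ℤ → A) (Ω : Set (ℤ → A)) : ℝ :=
  sInf (confDist ω '' Ω)

/-- The Hausdorff distance between two sets of configurations, induced by `confDist`. -/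
noncomputable def hausDist (Ω₁ Ω₂ : Set (ℤ → A)) : ℝ :=
  max (sSup ((fun ω => distToSet ω Ω₂) '' Ω₁)) (sSup ((fun ω => distToSet ω Ω₁) '' Ω₂))

/-- The product topology on `ℤ → A`, where `A` carries the discrete topology. -/
def confTop (A : Type*) : TopologicalSpace (ℤ → A) :=
  @Pi.topologicalSpace ℤ (fun _ => A) fun _ => ⊥

/-- The shift orbit of a configuration. -/
def orbit (ω : ℤ → A) : Set (ℤ → A) := {η | ∃ m : ℤ, η = shift m ω}

/-- The hull of a configuration: the closure of its shift orbit in the product topology. -/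
def hull (ω : ℤ → A) : Set (ℤ → A) := @closure _ (confTop A) (orbit ω)

/-- The `n`-th iterated hull `Ωₙ(ω₀)`: the hull of `Sⁿ(ω₀)`. -/
noncomputable def IHS [Nonempty A] (S : A → List A) (ω₀ : ℤ → A) (n : ℕ) : Set (ℤ → A) :=
  hull ((confSub S)^[n] ω₀)

/-- The substitution subshift `Ω(S) = {ω : W(ω) ⊆ W(S)}`. -/
def OmegaS (S : A → List A) : Set (ℤ → A) := {ω | ∀ u ∈ Dict ω, Legal S u}

/-- Edges of the directed graph `G(S)`: `u → w` iff `u, w` are both illegal and `w` is an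
infix of `S(u)`. -/
def GEdge (S : A → List A) (u w : List A) : Prop :=
  ¬Legal S u ∧ ¬Legal S w ∧ w <:+: wordSub S u

/-- `p` is a directed path of length `ℓ` in `G(S)` (on the vertex set of `2`-words). -/
def GPath (S : A → List A) (p : ℕ → List A) (ℓ : ℕ) : Prop :=
  (∀ i ≤ ℓ, (p i).length = 2) ∧ ∀ j < ℓ, GEdge S (p j) (p (j + 1))

/-- An initial configuration is good for `S` if every directed path in `G(S)` starting at a
`2`-word occurring in `ω₀` has length `< |A|²`. -/
def GoodInit [Fintype A] (S : A → List A) (ω₀ : ℤ → A) : Prop :=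
  ∀ (p : ℕ → List A) (ℓ : ℕ), GPath S p ℓ → Occurs (p 0) ω₀ → ℓ < (Fintype.card A) ^ 2

/-- The substitution matrix of `S`: `M(S)_{a,b}` is the number of occurrences of `a`
in `S(b)`. -/
def subMatrix [Fintype A] [DecidableEq A] (S : A → List A) : Matrix A A ℝ :=
  fun a b => ((S b).count a : ℝ)

/-- The Perron–Frobenius eigenvalue of `S`: the spectral radius of its substitution
matrix (viewed as a complex matrix). -/
noncomputable def pfEigenvalue [Fintype A] [DecidableEq A] (S : A → List A) : ℝ :=
  (spectralRadius ℂ ((subMatrix S).map (algebraMap ℝ ℂ))).toReal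

/-- The periodic configuration `u^∞`, satisfying `u^∞(n) = u(n mod |u|)`. -/
noncomputable def perConf [Nonempty A] (u : List A) : ℤ → A := fun n =>
  u.getD (n % (u.length : ℤ)).toNat (Classical.arbitrary A)

/-- `ℓ²(ℤ, ℂ)`. -/
abbrev l2Z : Type := lp (fun _ : ℤ => ℂ) 2

/-- `H` is the Schrödinger operator on `ℓ²(ℤ,ℂ)` with potential `v ∘ ω`:
`(H ψ)(n) = -(ψ(n+1) + ψ(n-1) - 2ψ(n)) + v(ω(n)) ψ(n)`. -/
def IsSchrodinger (v : A → ℝ) (ω : ℤ → A) (H : l2Z →L[ℂ] l2Z) : Prop :=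
  ∀ (ψ : l2Z) (n : ℤ),
    (H ψ : ℤ → ℂ) n = -((ψ : ℤ → ℂ) (n + 1) + (ψ : ℤ → ℂ) (n - 1) - 2 * (ψ : ℤ → ℂ) n)
      + (v (ω n) : ℂ) * (ψ : ℤ → ℂ) n

/-- The spectrum of `H`, viewed as a subset of `ℝ`. -/
def realSpectrum (H : l2Z →L[ℂ] l2Z) : Set ℝ := {x : ℝ | (x : ℂ) ∈ spectrum ℂ H}


section Aux
variable (S : A → List A) (ω : ℤ → A)

lemma blockStart_zero : blockStart S ω 0 = 0 := by simp [blockStart]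

lemma blockStart_succ (k : ℤ) :
    blockStart S ω (k + 1) = blockStart S ω k + ((S (ω k)).length : ℤ) := by
  rcases le_or_gt 0 k with hk | hk
  · rw [blockStart, blockStart, if_pos hk, if_pos (by omega)]
    have h1 : (k + 1).toNat = k.toNat + 1 := by omega
    rw [h1]
    simp [List.range_succ, Int.toNat_of_nonneg hk]
  · rcases eq_or_ne k (-1) with rfl | hne
    · show blockStart S ω 0 = _
      rw [blockStart_zero, blockStart, if_neg (by omega)]
      norm_num [show (1:ℕ) = 0 + 1 from rfl, List.range_succ]
    · rw [blockStart, blockStart, if_neg (by omega), if_neg (by omega)]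
      have h2 : (-k).toNat = (-(k+1)).toNat + 1 := by omega
      rw [h2]
      simp [List.range_succ]
      rw [show ((-1:ℤ) + -k) ⊔ 0 = -1 + -k from sup_eq_left.mpr (by omega)]
      rw [show -((-1:ℤ) + -k) - 1 = k from by ring]
      ring

variable (hS : ∀ a, S a ≠ [])
include hS

lemma blockStart_le_add (k : ℤ) (m : ℕ) :
    blockStart S ω k + m ≤ blockStart S ω (k + m) := by
  induction m with
  | zero => simp
  | succ m ih =>
    have h1 : (1:ℤ) ≤ (S (ω (k + m))).length := by
      have h := hS (ω (k+m))
      have h2 : (S (ω (k+m))).length ≠ 0 := by simpa [List.length_eq_zero_iff] using h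
      omega
    have h2 := blockStart_succ S ω (k + m)
    have e : k + ((m+1 : ℕ) : ℤ) = (k + m) + 1 := by push_cast; ring
    rw [e, h2]
    push_cast
    omega

lemma blockStart_mono {j k : ℤ} (h : j ≤ k) : blockStart S ω j ≤ blockStart S ω k := by
  obtain ⟨m, rfl⟩ : ∃ m : ℕ, k = j + m := ⟨(k - j).toNat, by omega⟩
  have := blockStart_le_add S ω hS j m
  omega

lemma blockStart_unique {n k k' : ℤ} (h1 : blockStart S ω k ≤ n)
    (h2 : n < blockStart S ω (k + 1)) (h1' : blockStart S ω k' ≤ n)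
    (h2' : n < blockStart S ω (k' + 1)) : k = k' := by
  rcases lt_trichotomy k k' with h | h | h
  · have := blockStart_mono S ω hS (show k + 1 ≤ k' by omega)
    omega
  · exact h
  · have := blockStart_mono S ω hS (show k' + 1 ≤ k by omega)
    omega

lemma blockStart_le_self {k : ℤ} (hk : k ≤ 0) : blockStart S ω k ≤ k := by
  have h := blockStart_le_add S ω hS k (-k).toNat
  have e : k + (((-k).toNat : ℤ)) = 0 := by omega
  rw [e, blockStart_zero] at h
  omega

lemma le_blockStart_self {k : ℤ} (hk : 0 ≤ k) : k ≤ blockStart S ω k := by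
  have h := blockStart_le_add S ω hS 0 k.toNat
  have e : (0:ℤ) + ((k.toNat : ℤ)) = k := by omega
  rw [e, blockStart_zero] at h
  omega

lemma blockStart_exists (n : ℤ) :
    ∃ k, blockStart S ω k ≤ n ∧ n < blockStart S ω (k + 1) := by
  have key : ∀ (m : ℕ) (lo : ℤ), blockStart S ω lo ≤ n → n < blockStart S ω (lo + m) →
      ∃ k, blockStart S ω k ≤ n ∧ n < blockStart S ω (k + 1) := by
    intro m
    induction m with
    | zero => intro lo h1 h2; simp at h2; omega
    | succ m ih =>
      intro lo h1 h2
      rcases le_or_gt (blockStart S ω (lo + m)) n with h | h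
      · refine ⟨lo + m, h, ?_⟩
        rwa [show lo + ((m+1:ℕ):ℤ) = lo + m + 1 by push_cast; ring] at h2
      · exact ih lo h1 h
  have hlo : blockStart S ω (-(n.natAbs : ℤ) - 1) ≤ n := by
    have := blockStart_le_self S ω hS (show -(n.natAbs : ℤ) - 1 ≤ 0 by omega)
    omega
  have hhi : n < blockStart S ω ((n.natAbs : ℤ) + 1) := by
    have := le_blockStart_self S ω hS (show (0:ℤ) ≤ (n.natAbs : ℤ) + 1 by omega)
    omega
  have e : -(n.natAbs : ℤ) - 1 + ((2 * n.natAbs + 2 : ℕ) : ℤ) = (n.natAbs : ℤ) + 1 := by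
    push_cast; ring
  refine key (2 * n.natAbs + 2) (-(n.natAbs : ℤ) - 1) hlo ?_
  rwa [e]

lemma confSub_eval [Nonempty A] {n k : ℤ} (h1 : blockStart S ω k ≤ n)
    (h2 : n < blockStart S ω (k + 1)) :
    confSub S ω n = (S (ω k)).getD (n - blockStart S ω k).toNat (Classical.arbitrary A) := by
  have hex : ∃ k : ℤ, blockStart S ω k ≤ n ∧ n < blockStart S ω (k + 1) := ⟨k, h1, h2⟩
  rw [confSub, dif_pos hex]
  obtain ⟨h1', h2'⟩ := Classical.choose_spec hex
  rw [blockStart_unique S ω hS h1' h2' h1 h2]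

omit hS in
lemma blockStart_period {P : ℤ} (hper : ∀ m, ω (m + P) = ω m) (k : ℤ) :
    blockStart S ω (k + P) = blockStart S ω k + blockStart S ω P := by
  induction k using Int.induction_on with
  | zero => simp [blockStart_zero]
  | succ k ih =>
    have e : (k:ℤ) + 1 + P = (k + P) + 1 := by ring
    rw [e, blockStart_succ, blockStart_succ, hper, ih]
    ring
  | pred k ih =>
    have h1 := blockStart_succ S ω (-(k:ℤ) - 1 + P)
    rw [show -(k:ℤ) - 1 + P + 1 = -(k:ℤ) + P by ring] at h1
    have h2 := blockStart_succ S ω (-(k:ℤ) - 1)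
    rw [show -(k:ℤ) - 1 + 1 = -(k:ℤ) by ring] at h2
    rw [hper (-(k:ℤ) - 1)] at h1
    omega

omit hS in
lemma blockStart_period_mul {P : ℤ} (hper : ∀ m, ω (m + P) = ω m) (q k : ℤ) :
    blockStart S ω (k + q * P) = blockStart S ω k + q * blockStart S ω P := by
  induction q using Int.induction_on with
  | zero => simp
  | succ q ih =>
    have e : k + ((q:ℤ)+1) * P = (k + q * P) + P := by ring
    rw [e, blockStart_period S ω hper, ih]
    ring
  | pred q ih =>
    have h := blockStart_period S ω hper (k + (-(q:ℤ)-1) * P)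
    rw [show k + (-(q:ℤ)-1) * P + P = k + (-(q:ℤ)) * P by ring, ih] at h
    linear_combination -h

end Aux

section Per
variable [Nonempty A]

lemma perConf_period (w : List A) (m : ℤ) :
    perConf w (m + (w.length : ℤ)) = perConf w m := by
  unfold perConf
  congr 2
  conv_lhs => rw [show m + (w.length:ℤ) = m + (w.length:ℤ) * 1 by ring]
  exact Int.add_mul_emod_self_left ..

omit [Nonempty A] in
lemma period_mul (ω : ℤ → A) (Q : ℤ) (hper : ∀ m, ω (m + Q) = ω m) :
    ∀ (t m : ℤ), ω (m + t * Q) = ω m := by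
  intro t
  induction t using Int.induction_on with
  | zero => simp
  | succ t ih =>
    intro m
    rw [show m + ((t:ℤ)+1) * Q = (m + t * Q) + Q by ring, hper, ih]
  | pred t ih =>
    intro m
    have h1 := hper (m + (-(t:ℤ)-1) * Q)
    rw [show m + (-(t:ℤ)-1) * Q + Q = m + (-(t:ℤ)) * Q by ring] at h1
    rw [← h1, ih m]

omit [Nonempty A] in
lemma dictLen_ncard_le_period (ω : ℤ → A) (Q : ℕ) (hQ : 0 < Q)
    (hper : ∀ m : ℤ, ω (m + (Q:ℤ)) = ω m) (r : ℕ) :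
    (DictLen ω r).ncard ≤ Q := by
  classical
  have hQZ : (0:ℤ) < (Q:ℤ) := by exact_mod_cast hQ
  have hsub : DictLen ω r ⊆
      ↑((Finset.range Q).image fun k : ℕ => (List.range r).map fun i => ω ((k:ℤ) + i)) := by
    rintro v ⟨hlen, k, hk⟩
    simp only [Finset.coe_image, Set.mem_image, Finset.mem_coe, Finset.mem_range]
    have h1 : 0 ≤ k % (Q:ℤ) := Int.emod_nonneg k hQZ.ne'
    have h2 : k % (Q:ℤ) < Q := Int.emod_lt_of_pos k hQZ
    refine ⟨(k % (Q:ℤ)).toNat, by omega, ?_⟩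
    rw [hk, hlen]
    apply List.map_congr_left
    intro i _
    have hx : (k % (Q:ℤ) + (i:ℤ)) + (k / (Q:ℤ)) * (Q:ℤ) = k + i := by
      linear_combination Int.mul_ediv_add_emod k (Q:ℤ)
    calc ω ((((k % (Q:ℤ)).toNat : ℤ)) + (i:ℤ))
        = ω (k % (Q:ℤ) + (i:ℤ)) := by rw [Int.toNat_of_nonneg h1]
      _ = ω (k + i) := by
          rw [← hx]
          exact (period_mul ω (Q:ℤ) hper (k / (Q:ℤ)) _).symm
  calc (DictLen ω r).ncard
      ≤ ((Finset.range Q).image fun k : ℕ => (List.range r).map fun i => ω ((k:ℤ) + i)).card := by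
        rw [← Set.ncard_coe_finset]
        exact Set.ncard_le_ncard hsub (Set.toFinite _)
    _ ≤ Q := le_trans Finset.card_image_le (by simp)

end Per

section Main
variable {A : Type*} (S : A → List A)

lemma wordSub_nil : wordSub S [] = [] := rfl

lemma wordSub_cons (a : A) (x : List A) : wordSub S (a :: x) = S a ++ wordSub S x := by
  simp [wordSub]

lemma wordSub_append (x y : List A) : wordSub S (x ++ y) = wordSub S x ++ wordSub S y := by
  simp [wordSub]

lemma wordSub_iterate_nil (n : ℕ) : (wordSub S)^[n] [] = [] := by
  induction n with
  | zero => rfl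
  | succ n ih => rw [Function.iterate_succ_apply, wordSub_nil, ih]

lemma wordSub_iterate_append (n : ℕ) (x y : List A) :
    (wordSub S)^[n] (x ++ y) = (wordSub S)^[n] x ++ (wordSub S)^[n] y := by
  induction n generalizing x y with
  | zero => rfl
  | succ n ih => rw [Function.iterate_succ_apply, wordSub_append, ih,
      Function.iterate_succ_apply, Function.iterate_succ_apply]

lemma perConf_eval [Nonempty A] (w : List A) (k : ℤ) (h1 : 0 ≤ k) (h2 : k < (w.length : ℤ)) :
    perConf w k = w.getD k.toNat (Classical.arbitrary A) := by
  unfold perConf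
  rw [Int.emod_eq_of_lt h1 h2]

lemma blockStart_perConf [Nonempty A] (w : List A) (k : ℕ) (hk : k ≤ w.length) :
    blockStart S (perConf w) (k : ℤ) = ((wordSub S (w.take k)).length : ℤ) := by
  induction k with
  | zero => simp [blockStart_zero, wordSub_nil]
  | succ k ih =>
    have hk' : k ≤ w.length := by omega
    have hkl : k < w.length := by omega
    rw [show ((k+1 : ℕ) : ℤ) = (k:ℤ) + 1 by push_cast; ring, blockStart_succ, ih hk']
    rw [perConf_eval w (k:ℤ) (by exact_mod_cast Nat.zero_le k) (by exact_mod_cast hkl)]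
    rw [List.take_succ, List.getElem?_eq_getElem hkl]
    rw [wordSub_append]
    simp [wordSub_cons, wordSub_nil, List.getElem?_eq_getElem hkl,
      List.getD_eq_getElem w _ (show ((k:ℤ)).toNat < w.length by simpa using hkl)]

lemma wordSub_getD (w : List A) (k : ℕ) (hk : k < w.length) (j : ℕ)
    (hj : j < (S (w[k])).length) (d : A) :
    (wordSub S w).getD ((wordSub S (w.take k)).length + j) d = (S (w[k])).getD j d := by
  have hsplit : wordSub S w = wordSub S (w.take k) ++ wordSub S (w.drop k) := by
    rw [← wordSub_append, List.take_append_drop]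
  rw [hsplit, List.getD_append_right _ _ _ _ (by omega)]
  rw [show (wordSub S (w.take k)).length + j - (wordSub S (w.take k)).length = j by omega]
  rw [List.drop_eq_getElem_cons hk, wordSub_cons]
  rw [List.getD_append _ _ _ _ hj]

variable (hS : ∀ a, S a ≠ [])
include hS

lemma wordSub_ne_nil (x : List A) (hx : x ≠ []) : wordSub S x ≠ [] := by
  cases x with
  | nil => simp at hx
  | cons a t => simp [wordSub_cons, hS a]

lemma wordSub_iterate_ne_nil (n : ℕ) (x : List A) (hx : x ≠ []) :
    (wordSub S)^[n] x ≠ [] := by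
  induction n generalizing x with
  | zero => exact hx
  | succ n ih => rw [Function.iterate_succ_apply]; exact ih _ (wordSub_ne_nil S hS x hx)

lemma confSub_perConf [Nonempty A] (w : List A) (hw : w ≠ []) :
    confSub S (perConf w) = perConf (wordSub S w) := by
  funext n
  have hω : ∀ m : ℤ, perConf w m = perConf w m := fun _ => rfl
  generalize hωdef : perConf w = ω at *
  -- basic data
  have hwlen : w.length ≠ 0 := by simpa [List.length_eq_zero_iff] using hw
  have hP : (0:ℤ) < (w.length : ℤ) := by exact_mod_cast Nat.pos_of_ne_zero hwlen
  have hperP : ∀ m : ℤ, ω (m + (w.length : ℤ)) = ω m := by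
    intro m; rw [← hωdef]; exact perConf_period w m
  have hWne : wordSub S w ≠ [] := wordSub_ne_nil S hS w hw
  have hWlen : (wordSub S w).length ≠ 0 := by simpa [List.length_eq_zero_iff] using hWne
  have hQ : (0:ℤ) < ((wordSub S w).length : ℤ) := by exact_mod_cast Nat.pos_of_ne_zero hWlen
  obtain ⟨k, hk1, hk2⟩ := blockStart_exists S ω hS n
  obtain ⟨r, q, hr0, hrP, hkeq⟩ :
      ∃ r q : ℤ, 0 ≤ r ∧ r < (w.length : ℤ) ∧ k = r + q * (w.length : ℤ) :=
    ⟨k % (w.length : ℤ), k / (w.length : ℤ), Int.emod_nonneg k hP.ne',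
      Int.emod_lt_of_pos k hP, by linear_combination -Int.mul_ediv_add_emod k (w.length : ℤ)⟩
  obtain ⟨rn, hrn⟩ : ∃ rn : ℕ, (rn : ℤ) = r := ⟨r.toNat, Int.toNat_of_nonneg hr0⟩
  have hrnlt : rn < w.length := by omega
  have hQbs : blockStart S ω (w.length : ℤ) = ((wordSub S w).length : ℤ) := by
    have h := blockStart_perConf S w w.length le_rfl
    rw [List.take_length, hωdef] at h
    exact h
  have hbsk : blockStart S ω k = blockStart S ω r + q * ((wordSub S w).length : ℤ) := by
    rw [hkeq, blockStart_period_mul S ω hperP q r, hQbs]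
  have hbsk1 : blockStart S ω (k + 1) =
      blockStart S ω (r + 1) + q * ((wordSub S w).length : ℤ) := by
    rw [show k + 1 = (r + 1) + q * (w.length : ℤ) by omega,
      blockStart_period_mul S ω hperP q (r+1), hQbs]
  -- letters agree
  have hωr : ω r = w[rn] := by
    rw [← hωdef, perConf_eval w r hr0 hrP, ← hrn, Int.toNat_natCast,
      List.getD_eq_getElem w _ hrnlt]
  have hωk : ω k = ω r := by
    have h1 : ω k = w.getD (k % (w.length : ℤ)).toNat (Classical.arbitrary A) := by
      rw [← hωdef]; rfl
    have hmodk : k % (w.length : ℤ) = r := by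
      rw [hkeq]
      rw [show r + q * (w.length : ℤ) = r + (w.length : ℤ) * q by ring,
        Int.add_mul_emod_self_left]
      exact Int.emod_eq_of_lt hr0 hrP
    rw [h1, hmodk, ← hωdef, perConf_eval w r hr0 hrP]
  -- the offset j
  have hbsucc := blockStart_succ S ω k
  have hbsuccr := blockStart_succ S ω r
  obtain ⟨jn, hjn⟩ : ∃ jn : ℕ, (jn : ℤ) = n - blockStart S ω k :=
    ⟨(n - blockStart S ω k).toNat, Int.toNat_of_nonneg (by omega)⟩
  have hjlen : (jn : ℤ) < ((S (ω r)).length : ℤ) := by rw [← hωk]; omega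
  have hbs_r0 : 0 ≤ blockStart S ω r := by
    have := blockStart_mono S ω hS hr0
    rw [blockStart_zero] at this
    exact this
  have hbs_rQ : blockStart S ω (r + 1) ≤ ((wordSub S w).length : ℤ) := by
    rw [← hQbs]
    exact blockStart_mono S ω hS (by omega)
  have hbsr_eq : blockStart S ω r = ((wordSub S (w.take rn)).length : ℤ) := by
    have h := blockStart_perConf S w rn (by omega)
    rw [hrn, hωdef] at h
    exact h
  -- n mod Q
  have hmod : n % ((wordSub S w).length : ℤ) = blockStart S ω r + jn := by
    have hnval : n = (blockStart S ω r + jn) + ((wordSub S w).length : ℤ) * q := by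
      linear_combination -hjn + hbsk
    rw [hnval, Int.add_mul_emod_self_left]
    exact Int.emod_eq_of_lt (by omega) (by omega)
  -- evaluate both sides
  rw [confSub_eval S ω hS hk1 hk2]
  rw [show (n - blockStart S ω k).toNat = jn by omega]
  show (S (ω k)).getD jn (Classical.arbitrary A) = (wordSub S w).getD
    ((n % ((wordSub S w).length : ℤ)).toNat) (Classical.arbitrary A)
  have htn : (blockStart S ω r + (jn:ℤ)).toNat = (wordSub S (w.take rn)).length + jn := by
    rw [hbsr_eq]; omega
  rw [hmod, htn]
  rw [wordSub_getD S w rn hrnlt jn (by rw [hωr] at hjlen; exact_mod_cast hjlen) _]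
  rw [hωk, hωr]

end Main

section Final
variable {A : Type*}

lemma wordSub_iterate_length_le (S : A → List A) (Cu θ : ℝ)
    (hgrow : ∀ (a : A) (n : ℕ), (((wordSub S)^[n] [a]).length : ℝ) ≤ Cu * θ ^ n)
    (n : ℕ) (v : List A) :
    (((wordSub S)^[n] v).length : ℝ) ≤ Cu * θ ^ n * v.length := by
  induction v with
  | nil => simp [wordSub_iterate_nil]
  | cons a t ih =>
    rw [show a :: t = [a] ++ t from rfl, wordSub_iterate_append, List.length_append]
    have h1 := hgrow a n
    push_cast
    calc ((((wordSub S)^[n] [a]).length : ℝ)) + (((wordSub S)^[n] t).length : ℝ)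
        ≤ Cu * θ ^ n + Cu * θ ^ n * t.length := add_le_add h1 ih
      _ = Cu * θ ^ n * (([a] ++ t).length : ℝ) := by
          push_cast [List.length_append, List.length_singleton]; ring


end Final

/-- complexity bound for the iterates of a periodic configuration:
`|W(Sⁿ(u^∞))_r| ≤ Ĉ θⁿ |u|`. -/
theorem stmt11 {A : Type*} [Fintype A] [Nonempty A] (S : A → List A) (hS : ∀ a, S a ≠ [])
    (Cu θ : ℝ) (hCu : 0 < Cu) (hθ : 1 ≤ θ)
    (hgrow : ∀ (a : A) (n : ℕ), (((wordSub S)^[n] [a]).length : ℝ) ≤ Cu * θ ^ n)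
    (u : List A) (hu : u ≠ []) :
    ∀ (n r : ℕ), 1 ≤ r →
      ((DictLen ((confSub S)^[n] (perConf u)) r).ncard : ℝ) ≤ Cu * θ ^ n * u.length := by
  intro n r _
  have hkey : (confSub S)^[n] (perConf u) = perConf ((wordSub S)^[n] u) := by
    induction n with
    | zero => rfl
    | succ n ih =>
      rw [Function.iterate_succ_apply', ih,
        confSub_perConf S hS _ (wordSub_iterate_ne_nil S hS n u hu)]
      exact congrArg perConf (Function.iterate_succ_apply' (wordSub S) n u).symm
  rw [hkey]
  have hne := wordSub_iterate_ne_nil S hS n u hu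
  have hQpos : 0 < ((wordSub S)^[n] u).length := List.length_pos_iff.mpr hne
  have hcard := dictLen_ncard_le_period (perConf ((wordSub S)^[n] u))
    ((wordSub S)^[n] u).length hQpos (fun m => perConf_period _ m) r
  have hlen := wordSub_iterate_length_le S Cu θ hgrow n u
  calc ((DictLen (perConf ((wordSub S)^[n] u)) r).ncard : ℝ)
      ≤ (((wordSub S)^[n] u).length : ℝ) := by exact_mod_cast hcard
    _ ≤ Cu * θ ^ n * u.length := hlen


end QC
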